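/- For finite connected simple graphs G₁ and G₂, the set of peripheral vertices of the Cartesian product G₁ □ G₂ equals Peri(G₁) × Peri(G₂). -/

import Mathlib

open Finset SimpleGraph

noncomputable section

/-- Eccentricity of a vertex: maximum distance to any vertex. -/
def ecc {V : Type*} [Fintype V] (G : SimpleGraph V) (u : V) : ℕ :=
  Finset.univ.sup (G.dist u)

/-- Diameter: maximum eccentricity. -/
def gdiam {V : Type*} [Fintype V] (G : SimpleGraph V) : ℕ :=
  Finset.univ.sup (ecc G)

/-- The set of peripheral vertices: vertices of maximum eccentricity. -/
def peri {V : Type*} [Fintype V] [DecidableEq V] (G : SimpleGraph V) : Finset V :=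
  Finset.univ.filter (fun u => ecc G u = gdiam G)

/-- Wiener index: sum of distances over unordered pairs of distinct vertices. -/
def wiener {V : Type*} [Fintype V] [DecidableEq V] (G : SimpleGraph V) : ℚ :=
  (1/2) * ∑ p ∈ (Finset.univ : Finset V).offDiag, (G.dist p.1 p.2 : ℚ)

/-- Hyper-Wiener index. -/
def hyperWiener {V : Type*} [Fintype V] [DecidableEq V] (G : SimpleGraph V) : ℚ :=
  (1/4) * ∑ p ∈ (Finset.univ : Finset V).offDiag,
    ((G.dist p.1 p.2 : ℚ) + (G.dist p.1 p.2 : ℚ) ^ 2)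

/-- Peripheral Wiener index. -/
def periWiener {V : Type*} [Fintype V] [DecidableEq V] (G : SimpleGraph V) : ℚ :=
  (1/2) * ∑ p ∈ (peri G).offDiag, (G.dist p.1 p.2 : ℚ)

/-- Peripheral hyper-Wiener index. -/
def periHyperWiener {V : Type*} [Fintype V] [DecidableEq V] (G : SimpleGraph V) : ℚ :=
  (1/4) * ∑ p ∈ (peri G).offDiag,
    ((G.dist p.1 p.2 : ℚ) + (G.dist p.1 p.2 : ℚ) ^ 2)

end


lemma walk_lb {V W : Type*} {G : SimpleGraph V} {H : SimpleGraph W}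
    (hG : G.Connected) (hH : H.Connected)
    {p q : V × W} (w : (G.boxProd H).Walk p q) :
    G.dist p.1 q.1 + H.dist p.2 q.2 ≤ w.length := by
  induction w with
  | nil => simp
  | @cons u v r h w ih =>
    rw [SimpleGraph.Walk.length_cons]
    rcases SimpleGraph.boxProd_adj.mp h with ⟨hadj, heq⟩ | ⟨hadj, heq⟩
    · have t : G.dist u.1 r.1 ≤ G.dist u.1 v.1 + G.dist v.1 r.1 := hG.dist_triangle
      have e : G.dist u.1 v.1 ≤ 1 := SimpleGraph.dist_le hadj.toWalk
      rw [← heq] at ih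
      omega
    · have t : H.dist u.2 r.2 ≤ H.dist u.2 v.2 + H.dist v.2 r.2 := hH.dist_triangle
      have e : H.dist u.2 v.2 ≤ 1 := SimpleGraph.dist_le hadj.toWalk
      rw [← heq] at ih
      omega

lemma boxProd_dist {V W : Type*} {G : SimpleGraph V} {H : SimpleGraph W}
    (hG : G.Connected) (hH : H.Connected) (a b : V) (x y : W) :
    (G.boxProd H).dist (a, x) (b, y) = G.dist a b + H.dist x y := by
  apply le_antisymm
  · obtain ⟨w1, h1⟩ := hG.exists_walk_length_eq_dist a b
    obtain ⟨w2, h2⟩ := hH.exists_walk_length_eq_dist x y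
    calc (G.boxProd H).dist (a, x) (b, y)
        ≤ ((w1.boxProdLeft H x).append (w2.boxProdRight G b)).length :=
          SimpleGraph.dist_le _
      _ = G.dist a b + H.dist x y := by
          rw [SimpleGraph.Walk.length_append,
            show (w1.boxProdLeft H x).length = w1.length from SimpleGraph.Walk.length_map _ _,
            show (w2.boxProdRight G b).length = w2.length from SimpleGraph.Walk.length_map _ _, h1, h2]
  · obtain ⟨w, hw⟩ := ((hG.boxProd hH).exists_walk_length_eq_dist (a, x) (b, y))
    rw [← hw]; exact walk_lb hG hH w

lemma supAddSup {V W : Type*} [Fintype V] [Fintype W] [Nonempty V] [Nonempty W]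
    (f : V → ℕ) (g : W → ℕ) :
    (Finset.univ : Finset (V × W)).sup (fun p => f p.1 + g p.2) =
      Finset.univ.sup f + Finset.univ.sup g := by
  apply le_antisymm
  · exact Finset.sup_le fun p _ =>
      add_le_add (Finset.le_sup (Finset.mem_univ _)) (Finset.le_sup (Finset.mem_univ _))
  · obtain ⟨b, -, hb⟩ := Finset.exists_mem_eq_sup Finset.univ Finset.univ_nonempty f
    obtain ⟨y, -, hy⟩ := Finset.exists_mem_eq_sup Finset.univ Finset.univ_nonempty g
    rw [hb, hy]
    exact Finset.le_sup (f := fun p => f p.1 + g p.2) (Finset.mem_univ (b, y))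

theorem peri_boxProd {V W : Type*} [Fintype V] [Fintype W] [DecidableEq V] [DecidableEq W]
    (G : SimpleGraph V) (H : SimpleGraph W) (hG : G.Connected) (hH : H.Connected) :
    peri (G.boxProd H) = (peri G) ×ˢ (peri H) := by
  have : Nonempty V := hG.nonempty
  have : Nonempty W := hH.nonempty
  have hecc : ∀ a x, ecc (G.boxProd H) (a, x) = ecc G a + ecc H x := by
    intro a x
    have : (G.boxProd H).dist (a, x) = fun p : V × W => G.dist a p.1 + H.dist x p.2 := by
      funext p
      exact boxProd_dist hG hH a p.1 x p.2
    rw [ecc, this, supAddSup]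
    rfl
  have hdiam : gdiam (G.boxProd H) = gdiam G + gdiam H := by
    have : ecc (G.boxProd H) = fun p : V × W => ecc G p.1 + ecc H p.2 := by
      funext p; exact hecc p.1 p.2
    rw [gdiam, this, supAddSup]
    rfl
  ext ⟨a, x⟩
  simp only [peri, Finset.mem_filter, Finset.mem_univ, true_and, Finset.mem_product]
  rw [hecc, hdiam]
  have h1 : ecc G a ≤ gdiam G := Finset.le_sup (Finset.mem_univ a)
  have h2 : ecc H x ≤ gdiam H := Finset.le_sup (Finset.mem_univ x)
  omega
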